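/- Assume: (R-bound) |r x s a| ≤ R_max for all x, s, a; (R-Lip) |r x₁ s a − r x₂ s a| ≤ C_r · ‖x₁ − x₂‖ for all x₁, x₂, s, a; (P-Lip) ∑_{s'} |P x₁ s a s' − P x₂ s a s'| ≤ C_P · ‖x₁ − x₂‖ for all x₁, x₂, s, a. Set B_V = (R_max + τ · log |A|) / (1 − γ). If V₁, V₂ : S → ℝ satisfy 𝒯_{x₁} V₁ = V₁ and 𝒯_{x₂} V₂ = V₂, then ‖V₁ − V₂‖_∞ ≤ ((C_r + γ · C_P · B_V) / (1 − γ)) · ‖x₁ − x₂‖. -/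

import Mathlib

open scoped BigOperators

noncomputable section

variable {S A X : Type*} [Fintype S] [Fintype A]
  [NormedAddCommGroup X] [NormedSpace ℝ X]

lemma lse_le {A : Type*} [Fintype A] [Nonempty A] {τ : ℝ} (hτ : 0 < τ)
    (u v : A → ℝ) (M : ℝ) (h : ∀ a, u a ≤ v a + M) :
    τ * Real.log (∑ a, Real.exp (u a / τ)) ≤
      τ * Real.log (∑ a, Real.exp (v a / τ)) + M := by
  have hpos : 0 < ∑ a, Real.exp (v a / τ) :=
    Finset.sum_pos (fun a _ => Real.exp_pos _) Finset.univ_nonempty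
  have hle : (∑ a, Real.exp (u a / τ)) ≤ (∑ a, Real.exp (v a / τ)) * Real.exp (M / τ) := by
    rw [Finset.sum_mul]
    refine Finset.sum_le_sum fun a _ => ?_
    rw [← Real.exp_add, ← add_div]
    exact Real.exp_le_exp.mpr (by gcongr; exact h a)
  have hlog := Real.log_le_log (Finset.sum_pos (fun a _ => Real.exp_pos _) Finset.univ_nonempty) hle
  rw [Real.log_mul (ne_of_gt hpos) (ne_of_gt (Real.exp_pos _)), Real.log_exp] at hlog
  have := mul_le_mul_of_nonneg_left hlog hτ.le
  rw [mul_add, mul_div_cancel₀ _ (ne_of_gt hτ)] at this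
  linarith

lemma lse_abs {A : Type*} [Fintype A] [Nonempty A] {τ : ℝ} (hτ : 0 < τ)
    (u v : A → ℝ) (M : ℝ) (h : ∀ a, |u a - v a| ≤ M) :
    |τ * Real.log (∑ a, Real.exp (u a / τ)) - τ * Real.log (∑ a, Real.exp (v a / τ))| ≤ M := by
  rw [abs_sub_le_iff]
  constructor
  · have := lse_le hτ u v M (fun a => by have := abs_le.mp (h a); linarith [this.2])
    linarith
  · have := lse_le hτ v u M (fun a => by have := abs_le.mp (h a); linarith [this.1])
    linarith

/-- Softmax (entropy-regularized) Bellman optimality operator. -/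
def softBellman (r : X → S → A → ℝ) (P : X → S → A → S → ℝ)
    (γ τ : ℝ) (x : X) (V : S → ℝ) (s : S) : ℝ :=
  τ * Real.log (∑ a, Real.exp ((r x s a + γ * ∑ s', P x s a s' * V s') / τ))

theorem soft_value_fixed_point_lipschitz_in_parameter
    [Nonempty S] [Nonempty A]
    (r : X → S → A → ℝ) (P : X → S → A → S → ℝ)
    (hP0 : ∀ x s a s', 0 ≤ P x s a s')
    (hP1 : ∀ x s a, ∑ s', P x s a s' = 1)
    (γ : ℝ) (hγ0 : 0 < γ) (hγ1 : γ < 1)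
    (τ : ℝ) (hτ : 0 < τ)
    (Rmax : ℝ) (hr : ∀ x s a, |r x s a| ≤ Rmax)
    (Cr CP : ℝ) (hCr : 0 ≤ Cr) (hCP : 0 ≤ CP)
    (hrLip : ∀ x₁ x₂ s a, |r x₁ s a - r x₂ s a| ≤ Cr * ‖x₁ - x₂‖)
    (hPLip : ∀ x₁ x₂ s a, (∑ s', |P x₁ s a s' - P x₂ s a s'|) ≤ CP * ‖x₁ - x₂‖)
    (BV : ℝ) (hBV : BV = (Rmax + τ * Real.log (Fintype.card A)) / (1 - γ))
    (x₁ x₂ : X) (V₁ V₂ : S → ℝ)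
    (hfix₁ : ∀ s, softBellman r P γ τ x₁ V₁ s = V₁ s)
    (hfix₂ : ∀ s, softBellman r P γ τ x₂ V₂ s = V₂ s) :
    (⨆ s, |V₁ s - V₂ s|) ≤ ((Cr + γ * CP * BV) / (1 - γ)) * ‖x₁ - x₂‖ := by
  set D := ⨆ s, |V₁ s - V₂ s| with hD
  set W := ⨆ s, |V₂ s| with hW
  have hDb : ∀ s, |V₁ s - V₂ s| ≤ D :=
    fun s => le_ciSup (Set.Finite.bddAbove (Set.finite_range fun s => |V₁ s - V₂ s|)) s
    
  have hWb : ∀ s, |V₂ s| ≤ W :=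
    fun s => le_ciSup (Set.Finite.bddAbove (Set.finite_range fun s => |V₂ s|)) s
    
  have hRmax : 0 ≤ Rmax :=
    le_trans (abs_nonneg _) (hr x₁ (Classical.arbitrary S) (Classical.arbitrary A))
  have hW0 : 0 ≤ W := le_trans (abs_nonneg _) (hWb (Classical.arbitrary S))
  have hγ : 0 < 1 - γ := by linarith
  have hcard : (1 : ℝ) ≤ (Fintype.card A : ℝ) := by
    exact_mod_cast Fintype.card_pos
  have hlogA : 0 ≤ Real.log (Fintype.card A) := Real.log_nonneg hcard
  -- sum bound
  have hsum : ∀ (x : X) (s : S) (a : A) (V : S → ℝ) (M : ℝ), (∀ s', |V s'| ≤ M) →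
      |∑ s', P x s a s' * V s'| ≤ M := by
    intro x s a V M hM
    calc |∑ s', P x s a s' * V s'| ≤ ∑ s', |P x s a s' * V s'| :=
          Finset.abs_sum_le_sum_abs _ _
      _ ≤ ∑ s', P x s a s' * M := by
          refine Finset.sum_le_sum fun s' _ => ?_
          rw [abs_mul, abs_of_nonneg (hP0 x s a s')]
          exact mul_le_mul_of_nonneg_left (hM s') (hP0 x s a s')
      _ = M := by rw [← Finset.sum_mul, hP1, one_mul]
  -- W ≤ BV
  have hWBV : W ≤ BV := by
    have key : ∀ s, |V₂ s| ≤ Rmax + τ * Real.log (Fintype.card A) + γ * W := by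
      intro s
      have hq : ∀ a, |r x₂ s a + γ * ∑ s', P x₂ s a s' * V₂ s'| ≤ Rmax + γ * W := by
        intro a
        have h1 := hr x₂ s a
        have h2 := hsum x₂ s a V₂ W hWb
        calc |r x₂ s a + γ * ∑ s', P x₂ s a s' * V₂ s'|
            ≤ |r x₂ s a| + |γ * ∑ s', P x₂ s a s' * V₂ s'| := abs_add_le _ _
          _ ≤ Rmax + γ * W := by
              rw [abs_mul, abs_of_nonneg hγ0.le]
              exact add_le_add h1 (mul_le_mul_of_nonneg_left h2 hγ0.le)
      have hcardlog : τ * Real.log (∑ _a : A, Real.exp ((0:ℝ) / τ)) =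
          τ * Real.log (Fintype.card A) := by
        simp [Real.exp_zero]
      have hup := lse_le hτ (fun a => r x₂ s a + γ * ∑ s', P x₂ s a s' * V₂ s')
        (fun _ => (0:ℝ)) (Rmax + γ * W) (fun a => by have := (abs_le.mp (hq a)).2; simpa using this)
      have hdn := lse_le hτ (fun _ => (0:ℝ))
        (fun a => r x₂ s a + γ * ∑ s', P x₂ s a s' * V₂ s') (Rmax + γ * W)
        (fun a => by have := (abs_le.mp (hq a)).1; simpa using by linarith)
      rw [hcardlog] at hup hdn
      have hv : V₂ s = τ * Real.log (∑ a, Real.exp ((r x₂ s a + γ * ∑ s', P x₂ s a s' * V₂ s') / τ)) :=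
        (hfix₂ s).symm
      rw [abs_le]
      constructor
      · rw [hv]; nlinarith [mul_nonneg hτ.le hlogA]
      · rw [hv]; linarith
    have := ciSup_le key
    rw [hBV, le_div_iff₀ hγ]
    rw [← hW] at this
    nlinarith
  have hBV0 : 0 ≤ BV := le_trans hW0 hWBV
  -- pointwise contraction + sensitivity
  have hpt : ∀ s, |V₁ s - V₂ s| ≤ γ * D + (Cr + γ * CP * BV) * ‖x₁ - x₂‖ := by
    intro s
    rw [← hfix₁ s, ← hfix₂ s]
    apply lse_abs hτ
    intro a
    have hΔ : (∑ s', P x₁ s a s' * V₁ s') - (∑ s', P x₂ s a s' * V₂ s')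
        = (∑ s', P x₁ s a s' * (V₁ s' - V₂ s')) + (∑ s', (P x₁ s a s' - P x₂ s a s') * V₂ s') := by
      rw [← Finset.sum_sub_distrib, ← Finset.sum_add_distrib]
      congr 1; ext s'; ring
    have h1 : |∑ s', P x₁ s a s' * (V₁ s' - V₂ s')| ≤ D :=
      hsum x₁ s a (fun s' => V₁ s' - V₂ s') D hDb
    have h2 : |∑ s', (P x₁ s a s' - P x₂ s a s') * V₂ s'| ≤ CP * ‖x₁ - x₂‖ * W := by
      calc |∑ s', (P x₁ s a s' - P x₂ s a s') * V₂ s'|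
          ≤ ∑ s', |(P x₁ s a s' - P x₂ s a s') * V₂ s'| := Finset.abs_sum_le_sum_abs _ _
        _ ≤ ∑ s', |P x₁ s a s' - P x₂ s a s'| * W := by
            refine Finset.sum_le_sum fun s' _ => ?_
            rw [abs_mul]
            exact mul_le_mul_of_nonneg_left (hWb s') (abs_nonneg _)
        _ = (∑ s', |P x₁ s a s' - P x₂ s a s'|) * W := by rw [Finset.sum_mul]
        _ ≤ CP * ‖x₁ - x₂‖ * W :=
            mul_le_mul_of_nonneg_right (hPLip x₁ x₂ s a) hW0
    have h2' : |∑ s', (P x₁ s a s' - P x₂ s a s') * V₂ s'| ≤ CP * ‖x₁ - x₂‖ * BV :=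
      le_trans h2 (mul_le_mul_of_nonneg_left hWBV (mul_nonneg hCP (norm_nonneg _)))
    have h3 := hrLip x₁ x₂ s a
    calc |(r x₁ s a + γ * ∑ s', P x₁ s a s' * V₁ s')
          - (r x₂ s a + γ * ∑ s', P x₂ s a s' * V₂ s')|
        = |(r x₁ s a - r x₂ s a) + γ * ((∑ s', P x₁ s a s' * (V₁ s' - V₂ s'))
            + (∑ s', (P x₁ s a s' - P x₂ s a s') * V₂ s'))| := by rw [← hΔ]; ring_nf
      _ ≤ |r x₁ s a - r x₂ s a| + γ * (|∑ s', P x₁ s a s' * (V₁ s' - V₂ s')|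
            + |∑ s', (P x₁ s a s' - P x₂ s a s') * V₂ s'|) := by
          refine le_trans (abs_add_le _ _) (add_le_add_right ?_ _)
          rw [abs_mul, abs_of_nonneg hγ0.le]
          exact mul_le_mul_of_nonneg_left (abs_add_le _ _) hγ0.le
      _ ≤ Cr * ‖x₁ - x₂‖ + γ * (D + CP * ‖x₁ - x₂‖ * BV) := by
          exact add_le_add h3 (mul_le_mul_of_nonneg_left (add_le_add h1 h2') hγ0.le)
      _ = γ * D + (Cr + γ * CP * BV) * ‖x₁ - x₂‖ := by ring
  have hDle := ciSup_le hpt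
  rw [← hD] at hDle
  rw [div_mul_eq_mul_div, le_div_iff₀ hγ]
  nlinarith
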